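/- Fix a ∈ ℝ, samples x₁ < ... < xₙ with n ≥ 3, weights wᵢ ∈ (0,1/2), Σwᵢ = 1, and let γ̂ be the unique positive solution of S₀(a,γ̂) = 1/2 where S₀(a,γ) = Σᵢ wᵢγ²/((xᵢ-a)²+γ²). Then the update γ'² = γ²·(1 − S₀(a,γ))/S₀(a,γ) is monotone toward γ̂: if γ < γ̂ then γ < γ' ≤ γ̂, and if γ > γ̂ then γ̂ ≤ γ' < γ; moreover γ' = γ if and only if γ = γ̂. -/

import Mathlib

open Finset Real

set_option maxHeartbeats 1000000 in
/-- Monotone convergence of the scale update `γ'² = γ²(1 − S₀(a,γ))/S₀(a,γ)`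
toward the unique positive solution `γ̂` of `S₀(a,γ̂) = 1/2`. -/
theorem scale_update_monotone (n : ℕ) (hn : 3 ≤ n) (x : Fin n → ℝ)
    (hx : StrictMono x) (w : Fin n → ℝ) (hw : ∀ i, 0 < w i) (hwhalf : ∀ i, w i < 1 / 2)
    (hw1 : ∑ i, w i = 1) (a : ℝ) (ghat : ℝ) (hghat : 0 < ghat)
    (heq : (∑ i, w i * ghat ^ 2 / ((x i - a) ^ 2 + ghat ^ 2)) = 1 / 2)
    (γ : ℝ) (hγ : 0 < γ) (γ' : ℝ) (hγ' : 0 < γ')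
    (hupd : γ' ^ 2 = γ ^ 2 * (1 - ∑ i, w i * γ ^ 2 / ((x i - a) ^ 2 + γ ^ 2)) /
      (∑ i, w i * γ ^ 2 / ((x i - a) ^ 2 + γ ^ 2))) :
    ((γ < ghat → γ < γ' ∧ γ' ≤ ghat) ∧ (ghat < γ → ghat ≤ γ' ∧ γ' < γ)) ∧
    (γ' = γ ↔ γ = ghat) := by
  have hne : (Finset.univ : Finset (Fin n)).Nonempty := ⟨⟨0, by omega⟩, mem_univ _⟩
  have hAγ : ∀ i : Fin n, 0 < (x i - a) ^ 2 + γ ^ 2 := fun i => by positivity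
  have hAg : ∀ i : Fin n, 0 < (x i - a) ^ 2 + ghat ^ 2 := fun i => by positivity
  have hgg : 0 < ghat ^ 2 + γ ^ 2 := by positivity
  set S := ∑ i, w i * γ ^ 2 / ((x i - a) ^ 2 + γ ^ 2) with hSdef
  have hSpos : 0 < S :=
    Finset.sum_pos (fun i _ => by have := hAγ i; have := hw i; positivity) hne
  -- some residual is nonzero
  have hex : ∃ i : Fin n, (x i - a) ^ 2 ≠ 0 := by
    by_contra h
    push_neg at h
    have : ∑ i, w i * ghat ^ 2 / ((x i - a) ^ 2 + ghat ^ 2) = ∑ i, w i := by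
      refine Finset.sum_congr rfl fun i _ => ?_
      rw [h i]
      field_simp
      ring
    rw [this, hw1] at heq
    norm_num at heq
  set E := ∑ i, w i * (x i - a) ^ 2 / (((x i - a) ^ 2 + ghat ^ 2) * ((x i - a) ^ 2 + γ ^ 2))
    with hEdef
  set D := ∑ i, w i * (ghat ^ 2 - (x i - a) ^ 2) ^ 2 /
      (((x i - a) ^ 2 + ghat ^ 2) * ((x i - a) ^ 2 + γ ^ 2) * (ghat ^ 2 + γ ^ 2)) with hDdef
  have hD0 : 0 ≤ D :=
    Finset.sum_nonneg fun i _ => by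
      have := hAγ i; have := hAg i; have := (hw i).le; positivity
  have hEpos : 0 < E := by
    obtain ⟨j, hj⟩ := hex
    have hj' : 0 < (x j - a) ^ 2 := lt_of_le_of_ne (sq_nonneg _) (Ne.symm hj)
    refine Finset.sum_pos' (fun i _ => by
      have := hAγ i; have := hAg i; have := (hw i).le; positivity) ⟨j, mem_univ j, ?_⟩
    have := hAγ j; have := hAg j; have := hw j
    positivity
  -- identity 1 :  1/2 - S = (ghat² - γ²) E
  have hI1 : 1 / 2 - S = (ghat ^ 2 - γ ^ 2) * E := by
    rw [← heq, hSdef, hEdef, ← Finset.sum_sub_distrib, Finset.mul_sum]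
    refine Finset.sum_congr rfl fun i _ => ?_
    have h1 := (hAγ i).ne'
    have h2 := (hAg i).ne'
    field_simp
    ring
  -- identity 2 :  ghat² S - γ² (1 - S) = γ² (ghat² - γ²) D
  have key : ∀ i : Fin n,
      ghat ^ 2 * (w i * γ ^ 2 / ((x i - a) ^ 2 + γ ^ 2))
        + γ ^ 2 * (w i * γ ^ 2 / ((x i - a) ^ 2 + γ ^ 2)) - γ ^ 2 * w i
      = γ ^ 2 * (ghat ^ 2 - γ ^ 2) * (w i * (ghat ^ 2 - (x i - a) ^ 2) ^ 2 /
          (((x i - a) ^ 2 + ghat ^ 2) * ((x i - a) ^ 2 + γ ^ 2) * (ghat ^ 2 + γ ^ 2)))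
        + (2 * γ ^ 2 * ghat ^ 2 / (ghat ^ 2 + γ ^ 2)) *
            (2 * (w i * ghat ^ 2 / ((x i - a) ^ 2 + ghat ^ 2)) - w i) := by
    intro i
    have h1 := (hAγ i).ne'
    have h2 := (hAg i).ne'
    have h3 := hgg.ne'
    field_simp
    ring
  have hsum := Finset.sum_congr rfl fun i (_ : i ∈ (Finset.univ : Finset (Fin n))) => key i
  simp only [Finset.sum_add_distrib, Finset.sum_sub_distrib, ← Finset.mul_sum] at hsum
  rw [hw1, heq] at hsum
  have hI2 : ghat ^ 2 * S - γ ^ 2 * (1 - S) = γ ^ 2 * (ghat ^ 2 - γ ^ 2) * D := by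
    rw [hSdef, hDdef]
    linarith [hsum]
  have hSne : S ≠ 0 := hSpos.ne'
  have hupd' : γ' ^ 2 * S = γ ^ 2 * (1 - S) := by
    rw [hupd]; field_simp
  have hA1 : γ' ^ 2 * S - γ ^ 2 * S = 2 * γ ^ 2 * ((ghat ^ 2 - γ ^ 2) * E) := by
    calc γ' ^ 2 * S - γ ^ 2 * S = γ ^ 2 * (1 - S) - γ ^ 2 * S := by rw [hupd']
      _ = 2 * γ ^ 2 * (1 / 2 - S) := by ring
      _ = 2 * γ ^ 2 * ((ghat ^ 2 - γ ^ 2) * E) := by rw [hI1]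
  have hA2 : ghat ^ 2 * S - γ' ^ 2 * S = γ ^ 2 * (ghat ^ 2 - γ ^ 2) * D := by
    rw [hupd']; exact hI2
  constructor
  · constructor
    · intro hlt
      have hsq : γ ^ 2 < ghat ^ 2 := sq_lt_sq' (by linarith) hlt
      have hp : 0 < 2 * γ ^ 2 * ((ghat ^ 2 - γ ^ 2) * E) := by
        have h0 : 0 < ghat ^ 2 - γ ^ 2 := by linarith
        positivity
      have h2 : γ ^ 2 < γ' ^ 2 := lt_of_mul_lt_mul_right (by linarith [hA1, hp]) hSpos.le
      have h5 : (0:ℝ) ≤ γ ^ 2 * (ghat ^ 2 - γ ^ 2) := mul_nonneg (by positivity) (by linarith)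
      have hq : (0:ℝ) ≤ γ ^ 2 * (ghat ^ 2 - γ ^ 2) * D := mul_nonneg h5 hD0
      have h4 : γ' ^ 2 ≤ ghat ^ 2 := le_of_mul_le_mul_right (by linarith [hA2, hq]) hSpos
      exact ⟨lt_of_pow_lt_pow_left₀ 2 hγ'.le h2, le_of_pow_le_pow_left₀ two_ne_zero hghat.le h4⟩
    · intro hlt
      have hsq : ghat ^ 2 < γ ^ 2 := sq_lt_sq' (by linarith) hlt
      have hp : 0 < 2 * γ ^ 2 * ((γ ^ 2 - ghat ^ 2) * E) := by
        have h0 : 0 < γ ^ 2 - ghat ^ 2 := by linarith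
        positivity
      have h2 : γ' ^ 2 < γ ^ 2 := lt_of_mul_lt_mul_right (by linarith [hA1, hp]) hSpos.le
      have h5 : (0:ℝ) ≤ γ ^ 2 * (γ ^ 2 - ghat ^ 2) := mul_nonneg (by positivity) (by linarith)
      have hq : (0:ℝ) ≤ γ ^ 2 * (γ ^ 2 - ghat ^ 2) * D := mul_nonneg h5 hD0
      have h4 : ghat ^ 2 ≤ γ' ^ 2 := le_of_mul_le_mul_right (by linarith [hA2, hq]) hSpos
      exact ⟨le_of_pow_le_pow_left₀ two_ne_zero hγ'.le h4, lt_of_pow_lt_pow_left₀ 2 hγ.le h2⟩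
  · constructor
    · intro h
      by_contra hne'
      rcases lt_or_gt_of_ne hne' with hlt | hlt
      · have hsq : γ ^ 2 < ghat ^ 2 := sq_lt_sq' (by linarith) hlt
        have hp : 0 < 2 * γ ^ 2 * ((ghat ^ 2 - γ ^ 2) * E) := by
          have h0 : 0 < ghat ^ 2 - γ ^ 2 := by linarith
          positivity
        have h1 : γ ^ 2 * S < γ' ^ 2 * S := by linarith [hA1, hp]
        rw [h] at h1
        exact lt_irrefl _ h1
      · have hsq : ghat ^ 2 < γ ^ 2 := sq_lt_sq' (by linarith) hlt
        have hp : 0 < 2 * γ ^ 2 * ((γ ^ 2 - ghat ^ 2) * E) := by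
          have h0 : 0 < γ ^ 2 - ghat ^ 2 := by linarith
          positivity
        have h1 : γ' ^ 2 * S < γ ^ 2 * S := by linarith [hA1, hp]
        rw [h] at h1
        exact lt_irrefl _ h1
    · intro h
      subst h
      have hS12 : S = 1 / 2 := by
        have h0 : (γ ^ 2 - γ ^ 2) * E = 0 := by ring
        linarith [hI1]
      have hsq : γ' ^ 2 = γ ^ 2 := by
        rw [hS12] at hupd'
        linarith
      have hz : (γ' - γ) * (γ' + γ) = 0 := by linear_combination hsq
      rcases mul_eq_zero.mp hz with h | h
      · linarith
      · linarith
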